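/- Let $m \geq 1$, $\boldsymbol{\sigma} \in \{0,1\}^m$, and let $\boldsymbol{\sigma}^*$ be the complementary shift given by $\sigma_j^* = \sigma_j \oplus 1$. For $u_1, u_2 \in \{0, \dots, m-1\}$ with $u_1 \neq u_2$ and any fixed $m$-bit $\beta$, we have $\sum_{\alpha \in \mathbb{Q}^*(2^m)} (\alpha_{m-u_1} \oplus \alpha_{m+1-j_1(u_1)})(\alpha_{m-u_2} \oplus \alpha_{m+1-j_2(u_2)}) = 2^{m-2}$, where $j_1$ and $j_2$ are the index functions associated with the shifts $\boldsymbol{\sigma}$ and $\boldsymbol{\sigma}^*$ respectively. -/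
import Mathlib


open Finset

/-- Distance to the nearest integer. -/
noncomputable def dnn (x : ℝ) : ℝ := |x - round x|

/-- Real value of a bit. -/
def bitr (b : Bool) : ℝ := if b then 1 else 0

/-- First coordinate of a Hammersley point: t_m/2 + ... + t_1/2^m. -/
noncomputable def hamX (m : ℕ) (t : Fin m → Bool) : ℝ :=
  ∑ j : Fin m, bitr (t j) / 2 ^ (m - j.val)

/-- Second coordinate of a shifted Hammersley point: s_1/2 + ... + s_m/2^m with s_j = t_j ⊕ σ_j. -/
noncomputable def hamY (m : ℕ) (σ t : Fin m → Bool) : ℝ :=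
  ∑ j : Fin m, bitr (xor (t j) (σ j)) / 2 ^ (j.val + 1)

/-- Local discrepancy of the shifted Hammersley point set H_m(σ). -/
noncomputable def Δham (m : ℕ) (σ : Fin m → Bool) (α β : ℝ) : ℝ :=
  ((Finset.univ.filter (fun t : Fin m → Bool => hamX m t < α ∧ hamY m σ t < β)).card : ℝ)
    - 2 ^ m * α * β

/-- digit i (1-based) of an m-digit vector, with value false outside 1..m. -/
def dig (m : ℕ) (a : Fin m → Bool) (i : ℕ) : Bool :=
  if h : 1 ≤ i ∧ i ≤ m then a ⟨i - 1, by omega⟩ else false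

/-- The m-bit real number with binary digits a: ∑ a_j 2^{-j}. -/
noncomputable def mval (m : ℕ) (a : Fin m → Bool) : ℝ :=
  ∑ j : Fin m, bitr (a j) / 2 ^ (j.val + 1)

/-- The index function j(u) associated with digits a of α, digits b of β, and shift τ. -/
def jfun (m : ℕ) (a b τ : Fin m → Bool) (u : ℕ) : ℕ :=
  Nat.findGreatest (fun j => dig m a (m + 1 - j) ≠ xor (dig m b j) (dig m τ j)) u

/-- Smallest m-bit number ≥ α. -/
noncomputable def upm (m : ℕ) (α : ℝ) : ℝ := (⌈2 ^ m * α⌉ : ℝ) / 2 ^ m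

/-- Local discrepancy of the symmetrized Hammersley point set H_m(σ) ∪ H_m(σ*) (multiset union). -/
noncomputable def Δsym (m : ℕ) (σ : Fin m → Bool) (α β : ℝ) : ℝ :=
  (((Finset.univ.filter (fun t : Fin m → Bool => hamX m t < α ∧ hamY m σ t < β)).card : ℝ)
    + ((Finset.univ.filter (fun t : Fin m → Bool =>
        hamX m t < α ∧ hamY m (fun j => !(σ j)) t < β)).card : ℝ))
    - 2 ^ (m + 1) * α * β

lemma findGreatest_congr' (P Q : ℕ → Prop) [DecidablePred P] [DecidablePred Q]
    (u : ℕ) (h : ∀ j, 1 ≤ j → j ≤ u → (P j ↔ Q j)) :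
    Nat.findGreatest P u = Nat.findGreatest Q u := by
  induction u with
  | zero => rfl
  | succ n ih =>
    rw [Nat.findGreatest_succ, Nat.findGreatest_succ]
    by_cases hP : P (n + 1)
    · rw [if_pos hP, if_pos ((h (n + 1) (by omega) le_rfl).mp hP)]
    · rw [if_neg hP, if_neg (fun hQ => hP ((h (n + 1) (by omega) le_rfl).mpr hQ)),
        ih (fun j h1 h2 => h j h1 (by omega))]

lemma dig_apply (m : ℕ) (a : Fin m → Bool) (i : ℕ) (h1 : 1 ≤ i) (h2 : i ≤ m) :
    dig m a i = a ⟨i - 1, by omega⟩ := dif_pos ⟨h1, h2⟩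

lemma dig_update_ne (m : ℕ) (a : Fin m → Bool) (p : Fin m) (x : Bool) (i : ℕ)
    (h : i ≠ p.val + 1) : dig m (Function.update a p x) i = dig m a i := by
  unfold dig
  split
  · next hc =>
    have hne : (⟨i - 1, by omega⟩ : Fin m) ≠ p := by
      intro he
      have := congrArg Fin.val he
      simp only at this
      omega
    rw [Function.update_of_ne hne]
  · rfl

lemma dig_update_self (m : ℕ) (a : Fin m → Bool) (p : Fin m) (x : Bool) :
    dig m (Function.update a p x) (p.val + 1) = x := by
  rw [dig_apply _ _ _ (by omega) p.isLt]
  have h : (⟨p.val + 1 - 1, by omega⟩ : Fin m) = p := by ext; simp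
  rw [h, Function.update_self]

lemma jfun_update (m u : ℕ) (b τ a : Fin m → Bool) (p : Fin m) (x : Bool)
    (hp : p.val + 1 ≤ m - u) (hu : u ≤ m) :
    jfun m (Function.update a p x) b τ u = jfun m a b τ u := by
  apply findGreatest_congr'
  intro j h1 h2
  rw [dig_update_ne _ _ _ _ _ (by omega)]

lemma F_update (m u : ℕ) (hm : 1 ≤ m) (hu : u ≤ m - 1) (b τ a : Fin m → Bool)
    (p : Fin m) (x : Bool) (hp : p.val + 1 < m - u) :
    bitr (xor (dig m (Function.update a p x) (m - u))
      (dig m (Function.update a p x) (m + 1 - jfun m (Function.update a p x) b τ u)))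
    = bitr (xor (dig m a (m - u)) (dig m a (m + 1 - jfun m a b τ u))) := by
  rw [jfun_update m u b τ a p x (le_of_lt hp) (by omega)]
  have hj : jfun m a b τ u ≤ u := Nat.findGreatest_le u
  rw [dig_update_ne _ _ _ _ _ (by omega), dig_update_ne _ _ _ _ _ (by omega)]

lemma F_flip (m u : ℕ) (hm : 1 ≤ m) (hu : u ≤ m - 1) (b τ a : Fin m → Bool)
    (p : Fin m) (hpv : p.val = m - u - 1) :
    bitr (xor (dig m (Function.update a p (!(a p))) (m - u))
      (dig m (Function.update a p (!(a p)))
        (m + 1 - jfun m (Function.update a p (!(a p))) b τ u)))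
    = 1 - bitr (xor (dig m a (m - u)) (dig m a (m + 1 - jfun m a b τ u))) := by
  have hmu : m - u = p.val + 1 := by omega
  rw [jfun_update m u b τ a p _ (by omega) (by omega)]
  have hj : jfun m a b τ u ≤ u := Nat.findGreatest_le u
  rw [dig_update_ne m a p (!(a p)) (m + 1 - jfun m a b τ u) (by omega)]
  rw [hmu, dig_update_self, dig_apply m a (p.val + 1) (by omega) (by omega)]
  have hpe : (⟨p.val + 1 - 1, by omega⟩ : Fin m) = p := by ext; simp
  rw [hpe]
  cases a p <;> cases dig m a (m + 1 - jfun m a b τ u) <;> simp [bitr]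

lemma sum_flip {m : ℕ} (p : Fin m) (g : (Fin m → Bool) → ℝ) :
    ∑ a : Fin m → Bool, g a
      = ∑ a : Fin m → Bool, g (Function.update a p (!(a p))) := by
  have hinv : Function.Involutive
      (fun a : Fin m → Bool => Function.update a p (!(a p))) := by
    intro a
    funext i
    rcases eq_or_ne i p with h | h
    · subst h; simp
    · simp [Function.update_of_ne h]
  exact (Fintype.sum_bijective _ hinv.bijective _ _ (fun a => rfl)).symm

lemma key_sum (m : ℕ) (hm : 1 ≤ m) (σ₁ σ₂ b : Fin m → Bool) (u₁ u₂ : ℕ)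
    (h₁ : u₁ ≤ m - 1) (h₂ : u₂ ≤ m - 1) (hlt : u₁ < u₂) :
    ∑ a : Fin m → Bool,
      bitr (xor (dig m a (m - u₁)) (dig m a (m + 1 - jfun m a b σ₁ u₁)))
        * bitr (xor (dig m a (m - u₂)) (dig m a (m + 1 - jfun m a b σ₂ u₂)))
      = (2 : ℝ) ^ m / 4 := by
  set F₁ := fun a : Fin m → Bool =>
    bitr (xor (dig m a (m - u₁)) (dig m a (m + 1 - jfun m a b σ₁ u₁))) with hF₁
  set F₂ := fun a : Fin m → Bool =>
    bitr (xor (dig m a (m - u₂)) (dig m a (m + 1 - jfun m a b σ₂ u₂))) with hF₂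
  set p₁ : Fin m := ⟨m - u₁ - 1, by omega⟩ with hp₁
  set p₂ : Fin m := ⟨m - u₂ - 1, by omega⟩ with hp₂
  have step1 : ∀ a, F₁ (Function.update a p₁ (!(a p₁))) = 1 - F₁ a := fun a =>
    F_flip m u₁ hm h₁ b σ₁ a p₁ rfl
  have step2 : ∀ a, F₂ (Function.update a p₂ (!(a p₂))) = 1 - F₂ a := fun a =>
    F_flip m u₂ hm h₂ b σ₂ a p₂ rfl
  have step2' : ∀ a, F₁ (Function.update a p₂ (!(a p₂))) = F₁ a := fun a =>
    F_update m u₁ hm h₁ b σ₁ a p₂ _ (by simp [hp₂]; omega)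
  have hS1 : ∑ a : Fin m → Bool, F₁ a = 2 ^ m / 2 := by
    have h2 : (2 : ℝ) * ∑ a : Fin m → Bool, F₁ a = 2 ^ m := by
      calc (2 : ℝ) * ∑ a : Fin m → Bool, F₁ a
          = (∑ a : Fin m → Bool, F₁ a)
            + ∑ a : Fin m → Bool, F₁ (Function.update a p₁ (!(a p₁))) := by
            rw [← sum_flip p₁ F₁]; ring
        _ = ∑ a : Fin m → Bool, (F₁ a + (1 - F₁ a)) := by
            rw [Finset.sum_add_distrib]
            exact congrArg _ (Finset.sum_congr rfl fun a _ => step1 a)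
        _ = ∑ _a : Fin m → Bool, (1 : ℝ) :=
            Finset.sum_congr rfl fun a _ => by ring
        _ = 2 ^ m := by
            rw [Finset.sum_const, Finset.card_univ]
            simp
    linarith
  have h2 : (2 : ℝ) * ∑ a : Fin m → Bool, F₁ a * F₂ a = ∑ a : Fin m → Bool, F₁ a := by
    calc (2 : ℝ) * ∑ a : Fin m → Bool, F₁ a * F₂ a
        = (∑ a : Fin m → Bool, F₁ a * F₂ a)
          + ∑ a : Fin m → Bool,
              F₁ (Function.update a p₂ (!(a p₂))) * F₂ (Function.update a p₂ (!(a p₂))) := by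
          rw [← sum_flip p₂ (fun a => F₁ a * F₂ a)]; ring
      _ = ∑ a : Fin m → Bool, (F₁ a * F₂ a + F₁ a * (1 - F₂ a)) := by
          rw [Finset.sum_add_distrib]
          exact congrArg _ (Finset.sum_congr rfl fun a _ => by rw [step2, step2'])
      _ = ∑ a : Fin m → Bool, F₁ a := Finset.sum_congr rfl fun a _ => by ring
  rw [hS1] at h2
  linarith

theorem stmt6 (m : ℕ) (hm : 1 ≤ m) (σ b : Fin m → Bool) (u₁ u₂ : ℕ)
    (h₁ : u₁ ≤ m - 1) (h₂ : u₂ ≤ m - 1) (hne : u₁ ≠ u₂) :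
    ∑ a ∈ Finset.univ.filter (fun a : Fin m → Bool => a ≠ fun _ => false),
      bitr (xor (dig m a (m - u₁)) (dig m a (m + 1 - jfun m a b σ u₁)))
        * bitr (xor (dig m a (m - u₂)) (dig m a (m + 1 - jfun m a b (fun j => !(σ j)) u₂)))
      = (2 : ℝ) ^ m / 4 := by
  rw [Finset.filter_ne']
  rw [Finset.sum_erase _ (by
    have hd : ∀ i, dig m (fun _ : Fin m => false) i = false := by
      intro i; unfold dig; split <;> rfl
    simp [hd, bitr])]
  rcases lt_or_gt_of_ne hne with h | h
  · exact key_sum m hm σ (fun j => !(σ j)) b u₁ u₂ h₁ h₂ h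
  · rw [Finset.sum_congr rfl (fun a _ => mul_comm _ _)]
    exact key_sum m hm (fun j => !(σ j)) σ b u₂ u₁ h₂ h₁ h
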